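/- arXiv:1502.03124 — 4 statements merged into one kernel-verified Lean document; each statement's English description precedes it below -/
import Mathlib

section
/- Let α be real with 0 ≤ α < 1 and let m̃, m be natural numbers with 1 ≤ m̃ ≤ m. If q is the Zipf distribution with parameter α on the library {1,…,m}, then the head probability satisfies Σ_{f=1}^{m̃} q_f ≥ ((m̃+1)^{1−α} − 1)/(m^{1−α} − 1 + (1−α)). -/
open Finset

/-- `H α x y = ∑_{i=x}^{y} i^{-α}` (real power). -/
noncomputable def H (α : ℝ) (x y : ℕ) : ℝ := ∑ i ∈ Finset.Icc x y, (i : ℝ) ^ (-α)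

/-- The Zipf distribution with parameter `α` on `{1,…,m}`: `q f = f^{−α}/H(α,1,m)`. -/
noncomputable def zipf (α : ℝ) (m : ℕ) (f : ℕ) : ℝ := (f : ℝ) ^ (-α) / H α 1 m

lemma antOn (α : ℝ) (hα0 : 0 ≤ α) (n : ℕ) :
    AntitoneOn (fun x : ℝ => x ^ (-α)) (Set.Icc (1:ℝ) (1 + n)) := by
  intro x hx y hy hxy
  exact Real.rpow_le_rpow_of_nonpos (lt_of_lt_of_le one_pos hx.1) hxy (neg_nonpos.2 hα0)

lemma intval (α : ℝ) (hα1 : α < 1) (b : ℝ) (hb : 1 ≤ b) :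
    ∫ x in (1:ℝ)..b, x ^ (-α) = (b ^ (1 - α) - 1) / (1 - α) := by
  rw [integral_rpow (Or.inl (by linarith))]
  rw [Real.one_rpow]
  ring_nf

lemma H_lower (α : ℝ) (hα0 : 0 ≤ α) (hα1 : α < 1) (mt : ℕ) :
    (((mt : ℝ) + 1) ^ (1 - α) - 1) / (1 - α) ≤ H α 1 mt := by
  have h1 : H α 1 mt = ∑ i ∈ Finset.range mt, ((1:ℝ) + i) ^ (-α) := by
    rw [H, show Finset.Icc 1 mt = Finset.Ico 1 (mt + 1) by rfl,
      Finset.sum_Ico_eq_sum_range]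
    simp only [Nat.add_sub_cancel]
    apply Finset.sum_congr rfl
    intro i _
    push_cast
    ring_nf
  have h2 := (antOn α hα0 mt).integral_le_sum
  rw [intval α hα1 (1 + mt) (le_add_of_nonneg_right (Nat.cast_nonneg mt))] at h2
  rw [h1]
  calc (((mt : ℝ) + 1) ^ (1 - α) - 1) / (1 - α)
      = ((1 + (mt:ℝ)) ^ (1 - α) - 1) / (1 - α) := by ring_nf
    _ ≤ _ := h2

lemma H_upper (α : ℝ) (hα0 : 0 ≤ α) (hα1 : α < 1) (m : ℕ) (hm : 1 ≤ m) :
    H α 1 m ≤ ((m : ℝ) ^ (1 - α) - 1 + (1 - α)) / (1 - α) := by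
  have key : H α 1 m = 1 + ∑ i ∈ Finset.range (m - 1),
      (fun x : ℝ => x ^ (-α)) (1 + ((i + 1 : ℕ) : ℝ)) := by
    rw [H, show Finset.Icc 1 m = Finset.Ico 1 (m + 1) by rfl]
    rw [← Finset.sum_Ico_consecutive (fun i : ℕ => (i:ℝ) ^ (-α)) (by omega : (1:ℕ) ≤ 2)
      (by omega : 2 ≤ m + 1)]
    rw [show Finset.Ico (1:ℕ) 2 = {1} by rfl, Finset.sum_singleton, Nat.cast_one,
      Real.one_rpow, Finset.sum_Ico_eq_sum_range, show m + 1 - 2 = m - 1 by omega]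
    congr 1
    apply Finset.sum_congr rfl
    intro i _
    push_cast
    ring_nf
  have h2 := (antOn α hα0 (m - 1)).sum_le_integral
  rw [intval α hα1 (1 + (m - 1 : ℕ)) (le_add_of_nonneg_right (Nat.cast_nonneg _))] at h2
  have hcast : (1 : ℝ) + ((m - 1 : ℕ) : ℝ) = (m : ℝ) := by
    have : ((m - 1 : ℕ) : ℝ) = (m : ℝ) - 1 := by
      push_cast [Nat.cast_sub hm]; ring
    rw [this]; ring
  rw [hcast] at h2
  rw [key]
  have h1α : (0:ℝ) < 1 - α := by linarith
  have hsplit : ((m : ℝ) ^ (1 - α) - 1 + (1 - α)) / (1 - α)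
      = ((m:ℝ) ^ (1 - α) - 1) / (1 - α) + 1 := by
    field_simp
  rw [hsplit]
  simp only [] at h2 ⊢
  linarith

/-- For `0 ≤ α < 1` and `1 ≤ m̃ ≤ m`, the Zipf head satisfies
`∑_{f=1}^{m̃} q_f ≥ ((m̃+1)^{1−α} − 1)/(m^{1−α} − 1 + (1−α))`. -/
theorem zipf_head_bound (α : ℝ) (hα0 : 0 ≤ α) (hα1 : α < 1)
    (mt m : ℕ) (hmt : 1 ≤ mt) (hm : mt ≤ m) :
    (((mt : ℝ) + 1) ^ (1 - α) - 1) / ((m : ℝ) ^ (1 - α) - 1 + (1 - α)) ≤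
      ∑ f ∈ Finset.Icc 1 mt, zipf α m f := by
  have hm1 : 1 ≤ m := le_trans hmt hm
  have hHm : 0 < H α 1 m := by
    apply Finset.sum_pos
    · intro i hi
      have : 1 ≤ i := (Finset.mem_Icc.1 hi).1
      positivity
    · exact ⟨1, Finset.mem_Icc.2 ⟨le_refl 1, hm1⟩⟩
  have hsum : ∑ f ∈ Finset.Icc 1 mt, zipf α m f = H α 1 mt / H α 1 m := by
    rw [H, Finset.sum_div]
    rfl
  rw [hsum]
  have h1α : (0:ℝ) < 1 - α := by linarith
  set A := (((mt : ℝ) + 1) ^ (1 - α) - 1) with hA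
  set B := ((m : ℝ) ^ (1 - α) - 1 + (1 - α)) with hB
  have hmtc : (1:ℝ) ≤ (mt:ℝ) + 1 := by
    have := Nat.cast_nonneg (α := ℝ) mt; linarith
  have hApos : 0 ≤ A := by
    rw [hA]
    have h := Real.rpow_le_rpow (by norm_num : (0:ℝ) ≤ 1) hmtc (le_of_lt h1α)
    rw [Real.one_rpow] at h
    linarith
  have hLo := H_lower α hα0 hα1 mt
  have hUp := H_upper α hα0 hα1 m hm1
  have hBpos : 0 < B := by
    have hq := (lt_div_iff₀ h1α).1 (lt_of_lt_of_le hHm hUp)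
    linarith
  rw [div_le_div_iff₀ hBpos hHm]
  have hLo' : A ≤ (1 - α) * H α 1 mt := by
    rw [div_le_iff₀ h1α] at hLo
    linarith
  have hUp' : (1 - α) * H α 1 m ≤ B := by
    rw [le_div_iff₀ h1α] at hUp
    linarith
  have hHmt : 0 ≤ H α 1 mt := by nlinarith
  nlinarith [mul_le_mul_of_nonneg_left hUp' hHmt, mul_le_mul_of_nonneg_right hLo' (le_of_lt hHm)]
end

section
/- Let ℓ ≥ 1 and r ≥ 1 be natural numbers. Under the uniform product measure on {1,…,ℓ}^r (modeling r i.i.d. uniform draws from {1,…,ℓ}), let Z denote the number of distinct values among the r coordinates. Then E[Z] = ℓ·(1 − (1 − 1/ℓ)^r), and for every real μ with 0 < μ ≤ ℓ·(1 − (1 − 1/ℓ)^r), one has P(Z ≤ ℓ·(1 − (1 − 1/ℓ)^r) − μ) ≤ exp(−μ²/(2ℓ·(1 − (1 − 1/ℓ)^r))). -/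
open Finset
open Classical


private lemma countAvoid (ℓ r : ℕ) (S : Finset (Fin ℓ)) :
    (∑ x : Fin r → Fin ℓ, if ∀ i, x i ∉ S then (1:ℝ) else 0)
      = ((Sᶜ.card : ℝ)) ^ r := by
  have h1 : ∀ x : Fin r → Fin ℓ,
      (if ∀ i, x i ∉ S then (1:ℝ) else 0) = ∏ i, (if x i ∉ S then (1:ℝ) else 0) :=
    fun x => by rw [Fintype.prod_boole]; congr
  simp_rw [h1]
  rw [← Fintype.piFinset_univ,
    Finset.sum_prod_piFinset univ (fun (_ : Fin r) (a : Fin ℓ) => if a ∉ S then (1:ℝ) else 0)]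
  have h2 : (∑ a : Fin ℓ, if a ∉ S then (1:ℝ) else 0) = (Sᶜ.card : ℝ) := by
    rw [Finset.sum_boole]
    congr 1
    simp [Finset.filter_not, Finset.compl_eq_univ_sdiff, Finset.filter_mem_eq_inter]
  simp only [h2, Finset.prod_const, Finset.card_univ, Fintype.card_fin]

private lemma sum_powerset_pow {α : Type*} [Fintype α] [DecidableEq α] (a : ℝ) :
    ∑ T ∈ (univ : Finset α).powerset, a ^ T.card = (a + 1) ^ (Fintype.card α) := by
  have h := Finset.prod_add (fun _ : α => a) (fun _ => 1) univ
  simp [Finset.prod_const] at h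
  rw [Finset.powerset_univ, ← h]

private lemma mgf_bound (ℓ r : ℕ) (hℓ : 1 ≤ ℓ) (t : ℝ) (ht : 0 ≤ t) :
    ∑ x : Fin r → Fin ℓ, (1/(ℓ:ℝ))^r * Real.exp (t * (((univ.image x)ᶜ.card : ℕ) : ℝ))
      ≤ (1 + (Real.exp t - 1) * (1 - 1/(ℓ:ℝ))^r) ^ ℓ := by
  set c : ℝ := Real.exp t - 1 with hc
  have hc0 : 0 ≤ c := by simp [hc, Real.one_le_exp ht]
  set q : ℝ := (1 - 1/(ℓ:ℝ))^r with hq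
  have hL0 : (0:ℝ) < (ℓ:ℝ) := by exact_mod_cast Nat.lt_of_lt_of_le Nat.zero_lt_one hℓ
  have hq0 : 0 ≤ q := by
    apply pow_nonneg
    have : 1/(ℓ:ℝ) ≤ 1 := by
      rw [div_le_one hL0]; exact_mod_cast hℓ
    linarith
  -- step 1: rewrite exp(t*Y) as a product
  have step1 : ∀ x : Fin r → Fin ℓ,
      Real.exp (t * (((univ.image x)ᶜ.card : ℕ) : ℝ))
        = ∏ j : Fin ℓ, (c * (if j ∉ univ.image x then (1:ℝ) else 0) + 1) := by
    intro x
    have e1 : ∀ j : Fin ℓ, (c * (if j ∉ univ.image x then (1:ℝ) else 0) + 1)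
        = if j ∈ (univ.image x)ᶜ then Real.exp t else 1 := by
      intro j
      by_cases h : j ∈ univ.image x <;> simp [h, hc]
    simp_rw [e1]
    rw [Finset.prod_ite_mem, Finset.univ_inter, Finset.prod_const, ← Real.exp_nat_mul,
      mul_comm]
  simp_rw [step1]
  -- step 2: expand the product over subsets
  have step2 : ∀ x : Fin r → Fin ℓ,
      (∏ j : Fin ℓ, (c * (if j ∉ univ.image x then (1:ℝ) else 0) + 1))
        = ∑ T ∈ (univ : Finset (Fin ℓ)).powerset,
            c ^ T.card * (if ∀ i, x i ∉ T then (1:ℝ) else 0) := by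
    intro x
    rw [Finset.prod_add]
    apply Finset.sum_congr rfl
    intro T _
    rw [Finset.prod_mul_distrib, Finset.prod_const]
    have : (∏ j ∈ T, (if j ∉ univ.image x then (1:ℝ) else 0))
        = if ∀ i, x i ∉ T then (1:ℝ) else 0 := by
      rw [Finset.prod_boole]
      have hiff : (∀ j ∈ T, j ∉ univ.image x) ↔ (∀ i, x i ∉ T) := by
        constructor
        · intro h i hmem
          exact h _ hmem (Finset.mem_image_of_mem x (Finset.mem_univ i))
        · intro h j hj hmem
          obtain ⟨i, _, rfl⟩ := Finset.mem_image.mp hmem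
          exact h i hj
      simp only [hiff]
    rw [this]
    simp [mul_comm]
  simp_rw [step2, Finset.mul_sum]
  rw [Finset.sum_comm]
  -- step 3: bound each subset's term
  have step3 : ∀ T ∈ (univ : Finset (Fin ℓ)).powerset,
      (∑ x : Fin r → Fin ℓ, (1/(ℓ:ℝ))^r * (c ^ T.card * (if ∀ i, x i ∉ T then (1:ℝ) else 0)))
        ≤ (c * q) ^ T.card := by
    intro T _
    have e : ∀ x : Fin r → Fin ℓ,
        (1/(ℓ:ℝ))^r * (c ^ T.card * (if ∀ i, x i ∉ T then (1:ℝ) else 0))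
          = (c ^ T.card * (1/(ℓ:ℝ))^r) * (if ∀ i, x i ∉ T then (1:ℝ) else 0) := fun x => by
      ring
    have heq : (∑ x : Fin r → Fin ℓ, (1/(ℓ:ℝ))^r * (c ^ T.card * (if ∀ i, x i ∉ T then (1:ℝ) else 0)))
        = (c ^ T.card * (1/(ℓ:ℝ))^r) * ((Tᶜ.card : ℝ)) ^ r := by
      simp_rw [e]
      rw [← Finset.mul_sum, countAvoid]
    rw [heq, mul_assoc]
    -- now bound (c^k/L^r) * (ℓ-k)^r ≤ (c q)^k
    have hcardT : T.card ≤ ℓ := by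
      simpa using Finset.card_le_univ T
    have hcompl : ((Tᶜ.card : ℕ) : ℝ) = (ℓ:ℝ) - T.card := by
      rw [Finset.card_compl, Fintype.card_fin, Nat.cast_sub hcardT]
    have hbern : ((Tᶜ.card : ℝ)) / (ℓ:ℝ) ≤ (1 - 1/(ℓ:ℝ)) ^ T.card := by
      have h1 : ((Tᶜ.card : ℝ)) / (ℓ:ℝ) = 1 + (T.card : ℝ) * (-(1/(ℓ:ℝ))) := by
        rw [hcompl]; field_simp; ring
      have h2 : (-2:ℝ) ≤ -(1/(ℓ:ℝ)) := by
        have : (1:ℝ)/(ℓ:ℝ) ≤ 1 := by rw [div_le_one hL0]; exact_mod_cast hℓ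
        linarith
      have := one_add_mul_le_pow h2 T.card
      rw [h1]
      rw [sub_eq_add_neg]
      exact this
    have hbase0 : (0:ℝ) ≤ ((Tᶜ.card : ℝ)) / (ℓ:ℝ) :=
      div_nonneg (Nat.cast_nonneg _) (le_of_lt hL0)
    have hpow : (1/(ℓ:ℝ))^r * ((Tᶜ.card : ℝ)) ^ r ≤ q ^ T.card := by
      have h3 : (1/(ℓ:ℝ))^r * ((Tᶜ.card : ℝ)) ^ r = (((Tᶜ.card : ℝ)) / (ℓ:ℝ)) ^ r := by
        rw [div_pow]; ring
      rw [h3, hq, ← pow_mul, mul_comm r T.card, pow_mul]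
      exact pow_le_pow_left₀ hbase0 hbern r
    calc c ^ T.card * ((1/(ℓ:ℝ))^r * ((Tᶜ.card : ℝ)) ^ r)
        ≤ c ^ T.card * q ^ T.card :=
          mul_le_mul_of_nonneg_left hpow (pow_nonneg hc0 _)
      _ = (c * q) ^ T.card := (mul_pow c q T.card).symm
  calc (∑ T ∈ (univ : Finset (Fin ℓ)).powerset,
          ∑ x : Fin r → Fin ℓ, (1/(ℓ:ℝ))^r * (c ^ T.card * (if ∀ i, x i ∉ T then (1:ℝ) else 0)))
      ≤ ∑ T ∈ (univ : Finset (Fin ℓ)).powerset, (c * q) ^ T.card :=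
        Finset.sum_le_sum step3
    _ = (c * q + 1) ^ ℓ := by rw [sum_powerset_pow, Fintype.card_fin]
    _ = (1 + c * q) ^ ℓ := by ring

private lemma log_ineq (u : ℝ) (hu0 : 0 < u) (hu1 : u ≤ 1) :
    (u - 1/u)/2 ≤ Real.log u := by
  have hw : 0 ≤ -Real.log u := by
    have := Real.log_nonpos (le_of_lt hu0) hu1; linarith
  have hs : -Real.log u ≤ Real.sinh (-Real.log u) := Real.self_le_sinh_iff.mpr hw
  rw [Real.sinh_eq, neg_neg, Real.exp_neg, Real.exp_log hu0] at hs
  rw [← one_div] at hs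
  linarith

private lemma key_ineq (x : ℝ) (hx0 : 0 < x) (hx1 : x < 1) :
    x^2/2 ≤ (1-x) * Real.log (1-x) + x := by
  have h1 : (0:ℝ) < 1 - x := by linarith
  have h2 := log_ineq (1-x) h1 (by linarith)
  have h3 : (1-x) * (((1-x) - 1/(1-x))/2) ≤ (1-x) * Real.log (1-x) :=
    mul_le_mul_of_nonneg_left h2 (le_of_lt h1)
  have h4 : (1-x) * (((1-x) - 1/(1-x))/2) = ((1-x)^2 - 1)/2 := by
    field_simp
  nlinarith [h3, h4]

/-- For `r` i.i.d. uniform draws from `{1,…,ℓ}` (explicit uniform product measure,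
each tuple having probability `ℓ^{−r}`), the number `Z` of distinct values satisfies
`E[Z] = ℓ(1 − (1 − 1/ℓ)^r)`, and for `0 < μ ≤ E[Z]`,
`P(Z ≤ E[Z] − μ) ≤ exp(−μ²/(2 E[Z]))`. -/
theorem uniform_distinct_mean_and_concentration
    (ℓ r : ℕ) (hℓ : 1 ≤ ℓ) (hr : 1 ≤ r) :
    (∑ x : Fin r → Fin ℓ, (1 / (ℓ : ℝ)) ^ r * ((Finset.univ.image x).card : ℝ)) =
        (ℓ : ℝ) * (1 - (1 - 1 / (ℓ : ℝ)) ^ r) ∧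
      ∀ μ : ℝ, 0 < μ → μ ≤ (ℓ : ℝ) * (1 - (1 - 1 / (ℓ : ℝ)) ^ r) →
        (∑ x : Fin r → Fin ℓ,
            if ((Finset.univ.image x).card : ℝ) ≤
                (ℓ : ℝ) * (1 - (1 - 1 / (ℓ : ℝ)) ^ r) - μ
            then (1 / (ℓ : ℝ)) ^ r else 0) ≤
          Real.exp (-μ ^ 2 / (2 * ((ℓ : ℝ) * (1 - (1 - 1 / (ℓ : ℝ)) ^ r)))) := by
  have hL0 : (0:ℝ) < (ℓ:ℝ) := by exact_mod_cast Nat.lt_of_lt_of_le Nat.zero_lt_one hℓ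
  have hL1 : (1:ℝ) ≤ (ℓ:ℝ) := by exact_mod_cast hℓ
  set L : ℝ := (ℓ:ℝ) with hLdef
  set q : ℝ := (1 - 1/L)^r with hqdef
  set m : ℝ := L * (1 - q) with hmdef
  have hbase0 : (0:ℝ) ≤ 1 - 1/L := by
    have : 1/L ≤ 1 := by rw [div_le_one hL0]; exact hL1
    linarith
  have hbase1 : 1 - 1/L < 1 := by
    have : 0 < 1/L := by positivity
    linarith
  have hq0 : 0 ≤ q := pow_nonneg hbase0 r
  have hq1 : q < 1 := pow_lt_one₀ hbase0 hbase1 (by omega)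
  have hm0 : 0 < m := by
    apply mul_pos hL0; linarith
  have hmL : m ≤ L := by
    rw [hmdef]
    nlinarith
  -- cardinality cast facts
  have hcard_le : ∀ x : Fin r → Fin ℓ, (univ.image x).card ≤ ℓ := by
    intro x
    simpa using Finset.card_le_univ (univ.image x)
  have hcompl_card : ∀ x : Fin r → Fin ℓ,
      (((univ.image x)ᶜ.card : ℕ) : ℝ) = L - ((univ.image x).card : ℝ) := by
    intro x
    rw [Finset.card_compl, Fintype.card_fin, Nat.cast_sub (hcard_le x)]
  have hsum1 : (∑ _x : Fin r → Fin ℓ, ((1:ℝ)/L)^r) = 1 := by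
    rw [Finset.sum_const, Finset.card_univ, nsmul_eq_mul]
    have hcf : (Fintype.card (Fin r → Fin ℓ) : ℝ) = L^r := by
      rw [Fintype.card_fun, Fintype.card_fin, Fintype.card_fin]
      push_cast; rfl
    rw [hcf]
    rw [div_pow, one_pow]
    field_simp
  -- expected number of missing values
  have hEY : (∑ x : Fin r → Fin ℓ, (1/L)^r * (((univ.image x)ᶜ.card : ℕ) : ℝ)) = L * q := by
    have hYx : ∀ x : Fin r → Fin ℓ, (((univ.image x)ᶜ.card : ℕ) : ℝ)
        = ∑ j : Fin ℓ, (if ∀ i, x i ∉ ({j} : Finset (Fin ℓ)) then (1:ℝ) else 0) := by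
      intro x
      have hfil : (univ.filter (fun j => ∀ i, x i ∉ ({j} : Finset (Fin ℓ)))) = (univ.image x)ᶜ := by
        ext j
        simp [eq_comm]
      rw [Finset.sum_boole, hfil]
    simp_rw [hYx, Finset.mul_sum]
    rw [Finset.sum_comm]
    have hterm : ∀ j : Fin ℓ,
        (∑ x : Fin r → Fin ℓ, (1/L)^r * (if ∀ i, x i ∉ ({j} : Finset (Fin ℓ)) then (1:ℝ) else 0)) = q := by
      intro j
      rw [← Finset.mul_sum, countAvoid]
      have hc1 : ((({j} : Finset (Fin ℓ))ᶜ.card : ℕ) : ℝ) = L - 1 := by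
        rw [Finset.card_compl, Finset.card_singleton, Fintype.card_fin, Nat.cast_sub hℓ,
          Nat.cast_one]
      rw [hc1, hqdef, ← mul_pow]
      congr 1
      field_simp
    rw [Finset.sum_congr rfl (fun j _ => hterm j), Finset.sum_const, Finset.card_univ,
      Fintype.card_fin, nsmul_eq_mul]
  -- Part 1: the mean
  have part1 : (∑ x : Fin r → Fin ℓ, (1/L)^r * ((univ.image x).card : ℝ)) = m := by
    have e : ∀ x : Fin r → Fin ℓ,
        (1/L)^r * ((univ.image x).card : ℝ)
          = (1/L)^r * L - (1/L)^r * (((univ.image x)ᶜ.card : ℕ) : ℝ) := by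
      intro x
      rw [hcompl_card x]
      ring
    rw [Finset.sum_congr rfl (fun x _ => e x), Finset.sum_sub_distrib, hEY]
    have : (∑ _x : Fin r → Fin ℓ, ((1:ℝ)/L)^r * L) = L := by
      rw [← Finset.sum_mul, hsum1, one_mul]
    rw [this, hmdef]
    ring
  constructor
  · exact part1
  -- Part 2: concentration
  intro μ hμ0 hμm
  rcases eq_or_lt_of_le hμm with hcase | hcase
  · -- μ = m : the event is empty
    have hzero : ∀ x : Fin r → Fin ℓ,
        (if ((univ.image x).card : ℝ) ≤ m - μ then ((1:ℝ)/L)^r else 0) = 0 := by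
      intro x
      rw [if_neg]
      have h1 : 1 ≤ (univ.image x).card := by
        rw [Nat.one_le_iff_ne_zero, ← Nat.pos_iff_ne_zero, Finset.card_pos]
        have : Nonempty (Fin r) := Fin.pos_iff_nonempty.mp (by omega)
        exact (Finset.univ_nonempty).image x
      have h2 : (1:ℝ) ≤ ((univ.image x).card : ℝ) := by exact_mod_cast h1
      rw [← hcase]
      intro h
      linarith
    rw [Finset.sum_congr rfl (fun x _ => hzero x), Finset.sum_const, smul_zero]
    positivity
  -- μ < m : Chernoff
  set u : ℝ := 1 - μ/m with hudef
  have hu0 : 0 < u := by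
    rw [hudef]
    have : μ/m < 1 := (div_lt_one hm0).mpr hcase
    linarith
  have hu1 : u < 1 := by
    rw [hudef]
    have : 0 < μ/m := div_pos hμ0 hm0
    linarith
  set t : ℝ := -Real.log u with htdef
  have ht0 : 0 ≤ t := by
    rw [htdef]
    have := Real.log_nonpos (le_of_lt hu0) (le_of_lt hu1)
    linarith
  have hexpt : Real.exp (-t) = u := by
    rw [htdef, neg_neg, Real.exp_log hu0]
  -- pointwise Chernoff bound
  have hpt : ∀ x : Fin r → Fin ℓ,
      (if ((univ.image x).card : ℝ) ≤ m - μ then ((1:ℝ)/L)^r else 0)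
        ≤ Real.exp (-(t * (L - m + μ))) *
            ((1/L)^r * Real.exp (t * (((univ.image x)ᶜ.card : ℕ) : ℝ))) := by
    intro x
    by_cases h : ((univ.image x).card : ℝ) ≤ m - μ
    · rw [if_pos h]
      have hY : L - m + μ ≤ (((univ.image x)ᶜ.card : ℕ) : ℝ) := by
        rw [hcompl_card x]; linarith
      have h1 : (1:ℝ) ≤ Real.exp (t * (((univ.image x)ᶜ.card : ℕ) : ℝ) - t * (L - m + μ)) := by
        apply Real.one_le_exp
        have := mul_le_mul_of_nonneg_left hY ht0
        linarith [this]
      have h2 : Real.exp (-(t * (L - m + μ))) *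
          ((1/L)^r * Real.exp (t * (((univ.image x)ᶜ.card : ℕ) : ℝ)))
          = (1/L)^r * Real.exp (t * (((univ.image x)ᶜ.card : ℕ) : ℝ) - t * (L - m + μ)) := by
        rw [Real.exp_sub, Real.exp_neg]
        field_simp
      rw [h2]
      nlinarith [h1, pow_nonneg (by positivity : (0:ℝ) ≤ 1/L) r]
    · rw [if_neg h]
      positivity
  have hsumbound := Finset.sum_le_sum (fun x (_ : x ∈ (univ : Finset (Fin r → Fin ℓ))) => hpt x)
  rw [← Finset.mul_sum] at hsumbound
  have hmgf := mgf_bound ℓ r hℓ t ht0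
  have hbound2 : (∑ x : Fin r → Fin ℓ,
      if ((univ.image x).card : ℝ) ≤ m - μ then ((1:ℝ)/L)^r else 0)
      ≤ Real.exp (-(t * (L - m + μ))) * (1 + (Real.exp t - 1) * q) ^ ℓ := by
    refine le_trans hsumbound ?_
    apply mul_le_mul_of_nonneg_left _ (le_of_lt (Real.exp_pos _))
    exact hmgf
  -- simplify the Chernoff bound
  have hkey1 : 1 + (Real.exp t - 1) * q = (1 - μ/L) / u := by
    have het : Real.exp t = 1/u := by
      rw [htdef, Real.exp_neg, Real.exp_log hu0, one_div]
    have e1 : 1 + (Real.exp t - 1) * q = (u + (1-u)*q)/u := by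
      rw [het]; field_simp
    have e2 : u + (1-u)*q = 1 - μ/L := by
      have hq' : q = (L - m)/L := by rw [hmdef]; field_simp; ring
      rw [hudef, hq']
      field_simp
      ring
    rw [e1, e2]
  have hμL : 0 ≤ 1 - μ/L := by
    have : μ/L ≤ 1 := by
      rw [div_le_one hL0]; linarith [hmL]
    linarith
  have hfinal : Real.exp (-(t * (L - m + μ))) * (1 + (Real.exp t - 1) * q) ^ ℓ
      ≤ Real.exp (-μ^2 / (2*m)) := by
    rw [hkey1, div_pow]
    have hupow : (0:ℝ) < u ^ ℓ := pow_pos hu0 ℓ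
    have hsplit : Real.exp (-(t * (L - m + μ))) = u ^ ℓ * Real.exp (t * (m - μ)) := by
      have : -(t * (L - m + μ)) = (ℓ:ℕ) * (-t) + t * (m - μ) := by
        rw [hLdef]; push_cast; ring
      rw [this, Real.exp_add, Real.exp_nat_mul, hexpt]
    rw [hsplit]
    have hassoc : u ^ ℓ * Real.exp (t * (m - μ)) * ((1 - μ/L)^ℓ / u ^ ℓ)
        = Real.exp (t * (m - μ)) * (1 - μ/L)^ℓ := by
      field_simp
    rw [hassoc]
    have hμexp : (1 - μ/L)^ℓ ≤ Real.exp (-μ) := by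
      have h1 : 1 - μ/L ≤ Real.exp (-(μ/L)) := by
        have := Real.add_one_le_exp (-(μ/L))
        linarith
      have h2 : (1 - μ/L)^ℓ ≤ (Real.exp (-(μ/L)))^ℓ := pow_le_pow_left₀ hμL h1 ℓ
      have h3 : (Real.exp (-(μ/L)))^ℓ = Real.exp (-μ) := by
        rw [← Real.exp_nat_mul]
        congr 1
        rw [hLdef]
        field_simp
      rw [h3] at h2
      exact h2
    calc Real.exp (t * (m - μ)) * (1 - μ/L)^ℓ
        ≤ Real.exp (t * (m - μ)) * Real.exp (-μ) :=
          mul_le_mul_of_nonneg_left hμexp (le_of_lt (Real.exp_pos _))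
      _ = Real.exp (t * (m - μ) + -μ) := (Real.exp_add _ _).symm
      _ ≤ Real.exp (-μ^2 / (2*m)) := by
          apply Real.exp_le_exp.mpr
          have hx0 : 0 < μ/m := div_pos hμ0 hm0
          have hx1 : μ/m < 1 := (div_lt_one hm0).mpr hcase
          have hk := key_ineq (μ/m) hx0 hx1
          have hlog : Real.log (1 - μ/m) = Real.log u := by rw [hudef]
          rw [hlog] at hk
          have hk' := mul_le_mul_of_nonneg_left hk (le_of_lt hm0)
          have e1 : m * ((μ/m)^2/2) = μ^2 / (2*m) := by field_simp
          have e2 : m * ((1 - μ/m) * Real.log u + μ/m) = m * u * Real.log u + μ := by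
            rw [hudef]; field_simp
          rw [e1, e2] at hk'
          have e3 : t * (m - μ) = -(m * u * Real.log u) := by
            rw [htdef, hudef]; field_simp
          rw [e3, neg_div]
          linarith [hk']
  exact le_trans hbound2 hfinal
end

section
/- Let n be a natural number, G ∈ [0,1] a real, and M, m̃ reals with 0 < M ≤ m̃. If N is a Binomial(n,G) random variable, then E[ Σ_{ℓ=1}^{N} C(N,ℓ) · (M/m̃)^{ℓ−1} · (1 − M/m̃)^{N−ℓ+1} ] ≤ (m̃/M − 1)·(1 − (1 − M/m̃)^{nG}), where the exponent nG on the right-hand side is a real power. -/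
open Finset

/-- Jensen step of Appendix B: for `N ∼ Binomial(n,G)` (the expectation over `N` written
explicitly with binomial weights),
`E[ ∑_{ℓ=1}^{N} C(N,ℓ) (M/m̃)^{ℓ−1} (1 − M/m̃)^{N−ℓ+1} ] ≤ (m̃/M − 1)(1 − (1 − M/m̃)^{nG})`,
the exponent `nG` on the right-hand side being a real power. -/
theorem binomial_expectation_bound
    (n : ℕ) (G : ℝ) (hG0 : 0 ≤ G) (hG1 : G ≤ 1)
    (M mt : ℝ) (hM : 0 < M) (hMmt : M ≤ mt) :
    ∑ N ∈ Finset.range (n + 1),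
        (n.choose N : ℝ) * G ^ N * (1 - G) ^ (n - N) *
          (∑ ℓ ∈ Finset.Icc 1 N,
            (N.choose ℓ : ℝ) * (M / mt) ^ (ℓ - 1) * (1 - M / mt) ^ (N - ℓ + 1)) ≤
      (mt / M - 1) * (1 - (1 - M / mt) ^ ((n : ℝ) * G)) := by
  have hmt : 0 < mt := hM.trans_le hMmt
  set p : ℝ := M / mt with hp
  have hp0 : 0 < p := div_pos hM hmt
  have hp1 : p ≤ 1 := (div_le_one hmt).mpr hMmt
  set q : ℝ := 1 - p with hq
  have hq0 : 0 ≤ q := by rw [hq]; linarith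
  -- inner sum identity
  have inner : ∀ N : ℕ,
      (∑ ℓ ∈ Finset.Icc 1 N, (N.choose ℓ : ℝ) * p ^ (ℓ - 1) * q ^ (N - ℓ + 1))
        = q / p * (1 - q ^ N) := by
    intro N
    have hins : Finset.range (N + 1) = insert 0 (Finset.Icc 1 N) := by
      ext k; simp [Nat.lt_succ_iff]; omega
    have hbin : (∑ ℓ ∈ Finset.range (N + 1), (N.choose ℓ : ℝ) * p ^ ℓ * q ^ (N - ℓ)) = 1 := by
      have := add_pow p q N
      have hpq : p + q = 1 := by rw [hq]; ring
      rw [hpq, one_pow] at this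
      rw [this]
      exact Finset.sum_congr rfl fun k _ => by ring
    have hIcc : (∑ ℓ ∈ Finset.Icc 1 N, (N.choose ℓ : ℝ) * p ^ ℓ * q ^ (N - ℓ)) = 1 - q ^ N := by
      have h0 : (0 : ℕ) ∉ Finset.Icc 1 N := by simp
      rw [hins, Finset.sum_insert h0] at hbin
      simp at hbin
      linarith
    have key : p * (∑ ℓ ∈ Finset.Icc 1 N, (N.choose ℓ : ℝ) * p ^ (ℓ - 1) * q ^ (N - ℓ + 1))
        = q * (1 - q ^ N) := by
      rw [Finset.mul_sum, ← hIcc, Finset.mul_sum]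
      apply Finset.sum_congr rfl
      intro ℓ hℓ
      simp only [Finset.mem_Icc] at hℓ
      have h1 : ℓ - 1 + 1 = ℓ := by omega
      have hpℓ : p ^ ℓ = p ^ (ℓ - 1) * p := by rw [← pow_succ, h1]
      rw [pow_succ, hpℓ]; ring
    field_simp at key ⊢
    linarith [key]
  calc ∑ N ∈ Finset.range (n + 1),
        (n.choose N : ℝ) * G ^ N * (1 - G) ^ (n - N) *
          (∑ ℓ ∈ Finset.Icc 1 N, (N.choose ℓ : ℝ) * p ^ (ℓ - 1) * q ^ (N - ℓ + 1))
      = q / p * (1 - (1 - p * G) ^ n) := by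
        have h1 : (∑ N ∈ Finset.range (n + 1),
            (n.choose N : ℝ) * G ^ N * (1 - G) ^ (n - N)) = 1 := by
          calc (∑ N ∈ Finset.range (n + 1), (n.choose N : ℝ) * G ^ N * (1 - G) ^ (n - N))
              = ∑ N ∈ Finset.range (n + 1), G ^ N * (1 - G) ^ (n - N) * (n.choose N : ℝ) :=
                Finset.sum_congr rfl fun k _ => by ring
            _ = (G + (1 - G)) ^ n := (add_pow G (1 - G) n).symm
            _ = 1 := by rw [add_sub_cancel, one_pow]
        have h2 : (∑ N ∈ Finset.range (n + 1),
            (n.choose N : ℝ) * G ^ N * (1 - G) ^ (n - N) * q ^ N) = (1 - p * G) ^ n := by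
          have := add_pow (G * q) (1 - G) n
          have hgq : G * q + (1 - G) = 1 - p * G := by rw [hq]; ring
          rw [hgq] at this
          rw [this]
          exact Finset.sum_congr rfl fun k _ => by rw [mul_pow]; ring
        have hmain : (∑ N ∈ Finset.range (n + 1),
            (n.choose N : ℝ) * G ^ N * (1 - G) ^ (n - N) *
              (∑ ℓ ∈ Finset.Icc 1 N, (N.choose ℓ : ℝ) * p ^ (ℓ - 1) * q ^ (N - ℓ + 1)))
            = q / p * (∑ N ∈ Finset.range (n + 1),
                ((n.choose N : ℝ) * G ^ N * (1 - G) ^ (n - N)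
                  - (n.choose N : ℝ) * G ^ N * (1 - G) ^ (n - N) * q ^ N)) := by
          rw [Finset.mul_sum]
          apply Finset.sum_congr rfl
          intro N _
          rw [inner N]; ring
        rw [hmain, Finset.sum_sub_distrib, h1, h2]
    _ ≤ q / p * (1 - q ^ ((n : ℝ) * G)) := by
        apply mul_le_mul_of_nonneg_left _ (div_nonneg hq0 hp0.le)
        have hbern : q ^ (G : ℝ) ≤ 1 - p * G := by
          have := rpow_one_add_le_one_add_mul_self (s := -p) (by linarith) hG0 hG1
          calc q ^ (G : ℝ) = (1 + -p) ^ (G : ℝ) := by rw [hq]; ring_nf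
            _ ≤ 1 + G * -p := this
            _ = 1 - p * G := by ring
        have hrw : q ^ ((n : ℝ) * G) = (q ^ (G : ℝ)) ^ n := by
          rw [mul_comm, Real.rpow_mul hq0, Real.rpow_natCast]
        have hpow : (q ^ (G : ℝ)) ^ n ≤ (1 - p * G) ^ n :=
          pow_le_pow_left₀ (Real.rpow_nonneg hq0 _) hbern n
        rw [hrw]; linarith
    _ = (mt / M - 1) * (1 - q ^ ((n : ℝ) * G)) := by
        have : q / p = mt / M - 1 := by
          rw [hq, hp]; field_simp
        rw [this]
end

section
/- Let α, n, M, m be reals with 0 < α < 1, n > 0, and 0 < M ≤ m. Define f(x) = x/M + n·(1 − (x/m)^{1−α}) for x > 0, and let x* = min{ max{ (n·(1−α)·M/m)^{1/α} · m, M }, m }. Then for every x with M ≤ x ≤ m, f(x*) ≤ f(x); that is, x* minimizes f over the interval [M, m]. -/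
open Real

/-- Tangent-line inequality for the concave function `t ↦ t^p`, `p ∈ [0,1]`:
`t^p ≤ s^p + p * s^(p-1) * (t - s)` for `s, t > 0`. -/
lemma rpow_tangent {p s t : ℝ} (hp0 : 0 ≤ p) (hp1 : p ≤ 1) (hs : 0 < s) (ht : 0 < t) :
    t ^ p ≤ s ^ p + p * s ^ (p - 1) * (t - s) := by
  have hts : 0 < t / s := div_pos ht hs
  have h1 : -1 ≤ t / s - 1 := by nlinarith
  have key : (1 + (t / s - 1)) ^ p ≤ 1 + p * (t / s - 1) :=
    rpow_one_add_le_one_add_mul_self h1 hp0 hp1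
  have e1 : (1 + (t / s - 1)) = t / s := by ring
  rw [e1] at key
  have hsp : 0 < s ^ p := rpow_pos_of_pos hs p
  have e2 : (t / s) ^ p = t ^ p / s ^ p := div_rpow ht.le hs.le p
  rw [e2] at key
  have key2 : t ^ p ≤ s ^ p * (1 + p * (t / s - 1)) := by
    calc t ^ p = s ^ p * (t ^ p / s ^ p) := by field_simp
    _ ≤ s ^ p * (1 + p * (t / s - 1)) := by
        exact mul_le_mul_of_nonneg_left key hsp.le
  have e3 : s ^ p * (1 + p * (t / s - 1)) = s ^ p + p * s ^ (p - 1) * (t - s) := by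
    have hsp1 : s ^ (p - 1) = s ^ p / s := by
      rw [rpow_sub hs, rpow_one]
    rw [hsp1]
    field_simp
  linarith [key2, le_of_eq e3.symm]

/-- Optimization of the RLFU cut-off (equation (22) of the paper): for reals
`0 < α < 1`, `n > 0`, `0 < M ≤ m`, the function
`f(x) = x/M + n(1 − (x/m)^{1−α})` on `[M, m]` is minimized at
`x* = min{max{(n(1−α)M/m)^{1/α}·m, M}, m}` (all powers are real powers). -/
theorem rlfu_cutoff_optimal (α n M m : ℝ)
    (hα0 : 0 < α) (hα1 : α < 1) (hn : 0 < n) (hM : 0 < M) (hMm : M ≤ m) :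
    ∀ x : ℝ, M ≤ x → x ≤ m →
      (min (max ((n * (1 - α) * M / m) ^ (1 / α) * m) M) m) / M +
          n * (1 - ((min (max ((n * (1 - α) * M / m) ^ (1 / α) * m) M) m) / m) ^ (1 - α)) ≤
        x / M + n * (1 - (x / m) ^ (1 - α)) := by
  intro x hxM hxm
  have hm : 0 < m := lt_of_lt_of_le hM hMm
  set c : ℝ := (n * (1 - α) * M / m) ^ (1 / α) with hc
  set s : ℝ := min (max (c * m) M) m with hs
  have hb : 0 < n * (1 - α) * M / m := by
    have h1α : 0 < 1 - α := by linarith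
    apply div_pos _ hm; positivity
  have hc0 : 0 < c := rpow_pos_of_pos hb _
  have hcα : c ^ α = n * (1 - α) * M / m := by
    rw [hc, ← Real.rpow_mul hb.le, one_div, inv_mul_cancel₀ (ne_of_gt hα0), rpow_one]
  have h1α : 0 < 1 - α := by linarith
  have hsM : M ≤ s := le_min (le_max_right _ _) hMm
  have hsm : s ≤ m := min_le_right _ _
  have hs0 : 0 < s := lt_of_lt_of_le hM hsM
  have hx0 : 0 < x := lt_of_lt_of_le hM hxM
  have hsm0 : 0 < s / m := div_pos hs0 hm
  have hxm0 : 0 < x / m := div_pos hx0 hm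
  have htan := rpow_tangent h1α.le (by linarith) hsm0 hxm0
  set w : ℝ := (s / m) ^ (1 - α - 1) with hw
  have hw0 : 0 < w := rpow_pos_of_pos hsm0 _
  -- the sign condition from the case analysis
  have key : 0 ≤ (x - s) * (m - n * (1 - α) * w * M) := by
    rcases le_or_gt (c * m) M with hA | hA
    · -- s = M
      have hsval : s = M := by rw [hs, max_eq_right hA, min_eq_left hMm]
      have hcle : c ≤ M / m := (le_div_iff₀ hm).mpr hA
      have h2 : c ^ α ≤ (M / m) ^ α := rpow_le_rpow hc0.le hcle hα0.le
      rw [hcα] at h2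
      have hMmα : 0 < (M / m) ^ α := rpow_pos_of_pos (div_pos hM hm) _
      have hwval : w = ((M / m) ^ α)⁻¹ := by
        rw [hw, hsval, show (1 - α - 1 : ℝ) = -α by ring,
          rpow_neg (div_pos hM hm).le]
      have h3 : n * (1 - α) * M ≤ m * ((M / m) ^ α) := by
        have := mul_le_mul_of_nonneg_right h2 hm.le
        calc n * (1 - α) * M = n * (1 - α) * M / m * m := by field_simp
          _ ≤ (M / m) ^ α * m := this
          _ = m * ((M / m) ^ α) := by ring
      have hfac : n * (1 - α) * w * M ≤ m := by
        calc n * (1 - α) * w * M = (n * (1 - α) * M) * ((M / m) ^ α)⁻¹ := by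
              rw [hwval]; ring
          _ ≤ (m * ((M / m) ^ α)) * ((M / m) ^ α)⁻¹ :=
              mul_le_mul_of_nonneg_right h3 (inv_nonneg.mpr hMmα.le)
          _ = m := by field_simp
      have : 0 ≤ x - s := by rw [hsval]; linarith
      exact mul_nonneg this (by linarith)
    · rcases le_or_gt m (c * m) with hB | hB
      · -- s = m
        have hsval : s = m := by
          rw [hs, max_eq_left hA.le, min_eq_right hB]
        have hc1 : 1 ≤ c := by nlinarith
        have h2 : (1 : ℝ) ≤ c ^ α := by
          have := rpow_le_rpow (by norm_num : (0:ℝ) ≤ 1) hc1 hα0.le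
          rwa [one_rpow] at this
        rw [hcα] at h2
        have hwval : w = 1 := by
          rw [hw, hsval, div_self hm.ne', one_rpow]
        have h3 : m ≤ n * (1 - α) * M := by
          have := mul_le_mul_of_nonneg_right h2 hm.le
          rw [one_mul, div_mul_cancel₀ _ hm.ne'] at this
          linarith
        have hx_s : x - s ≤ 0 := by rw [hsval]; linarith
        have hf : m - n * (1 - α) * w * M ≤ 0 := by rw [hwval]; linarith
        nlinarith [mul_nonneg (neg_nonneg.mpr hx_s) (neg_nonneg.mpr hf)]
      · -- s = c * m, interior
        have hsval : s = c * m := by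
          rw [hs, max_eq_left hA.le, min_eq_left hB.le]
        have hwval : w = (c ^ α)⁻¹ := by
          rw [hw, hsval, mul_div_cancel_right₀ _ hm.ne',
            show (1 - α - 1 : ℝ) = -α by ring, rpow_neg hc0.le]
        have hfac : n * (1 - α) * w * M = m := by
          rw [hwval, hcα]
          field_simp
        rw [hfac]
        simp
  -- combine the tangent bound with key
  have hdiv : n * ((1 - α) * w * (x / m - s / m)) ≤ (x - s) / M := by
    have e : n * ((1 - α) * w * (x / m - s / m)) = n * (1 - α) * w * (x - s) / m := by
      ring
    rw [e, div_le_div_iff₀ hm hM]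
    nlinarith [key]
  have h4 : (x / m) ^ (1 - α) - (s / m) ^ (1 - α) ≤ (1 - α) * w * (x / m - s / m) := by
    linarith [htan]
  have htan' := mul_le_mul_of_nonneg_left h4 hn.le
  have e2 : n * ((x / m) ^ (1 - α) - (s / m) ^ (1 - α)) =
      n * (x / m) ^ (1 - α) - n * (s / m) ^ (1 - α) := by ring
  rw [e2] at htan'
  have e3 : n * (1 - (s / m) ^ (1 - α)) = n - n * (s / m) ^ (1 - α) := by ring
  have e4 : n * (1 - (x / m) ^ (1 - α)) = n - n * (x / m) ^ (1 - α) := by ring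
  rw [e3, e4]
  have e5 : (x - s) / M = x / M - s / M := by ring
  rw [e5] at hdiv
  linarith [hdiv, htan']
end
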